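/- Displacements Theorem: let D be a topology on G refining T such that (i) D is shift-invariant: xV ∈ D for all x ∈ G, V ∈ D; (ii) the family B_0(D) of D-meagre sets is left-invariant: xM ∈ B_0(D) for all x ∈ G, M ∈ B_0(D); (iii) localization: H ∖ int_D(H) ∈ B_0(D) for every D-Baire set H; (iv) Kemperman property: for every 1_G ∈ U ∈ D there is δ > 0 with tU ∩ U ∈ B_+(D) for all ‖t‖ < δ; (v) modulo B_0(D) every D-Baire set is analytic in the topology T, and (G, D) is a Baire space. Then for every A ∈ B_+(D) there is a D-meagre set A' ⊆ A such that for every a ∈ A ∖ A' there exists ε = ε_A(a) > 0 with a x a⁻¹ A ∩ A ∈ B_+(D) for all x with ‖x‖ < ε; in particular {a x a⁻¹ : ‖x‖ < ε_A(a)} ⊆ AA⁻¹ for all a ∈ A off a B_0(D)-set. -/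

import Mathlib

open Set Topology TopologicalSpace MeasureTheory Filter Pointwise

/-- Displacements Theorem: let `D` be a shift-invariant topology refining `T`
with left-invariant meagre `σ`-ideal, localization, the Kemperman property,
such that modulo `B₀(D)` every `D`-Baire set is `T`-analytic and `(G, D)` is
a Baire space. Then for `A ∈ B₊(D)` and quasi all `a ∈ A` there is `ε > 0`
with `a x a⁻¹ A ∩ A ∈ B₊(D)` for `‖x‖ < ε`; in particular
`{a x a⁻¹ : ‖x‖ < ε} ⊆ AA⁻¹` off a `B₀(D)`-set of `a ∈ A`. -/
theorem stmt_17 {G : Type*} [Group G] [MetricSpace G] [IsTopologicalGroup G]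
    [SeparableSpace G]
    (hd : ∀ x y z : G, dist (x * z) (y * z) = dist x y)
    (D : TopologicalSpace G)
    (hfine : ∀ S : Set G, IsOpen S → IsOpen[D] S)
    (hshift : ∀ (x : G) (V : Set G), IsOpen[D] V → IsOpen[D] ((x * ·) '' V))
    (hinv : ∀ (x : G) (M : Set G), @IsMeagre G D M → @IsMeagre G D ((x * ·) '' M))
    (hloc : ∀ H : Set G, (∃ U : Set G, IsOpen[D] U ∧ @IsMeagre G D (symmDiff H U)) →
      @IsMeagre G D (H \ @interior G D H))
    (hkemp : ∀ U : Set G, IsOpen[D] U → (1 : G) ∈ U →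
      ∃ δ > (0 : ℝ), ∀ t : G, dist (1 : G) t < δ →
        (∃ V : Set G, IsOpen[D] V ∧ @IsMeagre G D (symmDiff ((t * ·) '' U ∩ U) V)) ∧
        ¬ @IsMeagre G D ((t * ·) '' U ∩ U))
    (hanal : ∀ H : Set G, (∃ U : Set G, IsOpen[D] U ∧ @IsMeagre G D (symmDiff H U)) →
      ∃ A' : Set G, MeasureTheory.AnalyticSet A' ∧ @IsMeagre G D (symmDiff H A'))
    (hBaire : @BaireSpace G D) :
    ∀ A : Set G, (∃ U : Set G, IsOpen[D] U ∧ @IsMeagre G D (symmDiff A U)) →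
      ¬ @IsMeagre G D A →
      ∃ A' : Set G, A' ⊆ A ∧ @IsMeagre G D A' ∧
        ∀ a ∈ A \ A', ∃ ε > (0 : ℝ),
          (∀ x : G, dist (1 : G) x < ε →
            (∃ V : Set G, IsOpen[D] V ∧
              @IsMeagre G D (symmDiff (((a * x * a⁻¹) * ·) '' A ∩ A) V)) ∧
            ¬ @IsMeagre G D (((a * x * a⁻¹) * ·) '' A ∩ A)) ∧
          (∀ x : G, dist (1 : G) x < ε → a * x * a⁻¹ ∈ A * A⁻¹) := by
  intro A hABaire hAnm
  letI := D
  -- interior of A in D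
  set I : Set G := @interior G D A with hIdef
  have hIsub : I ⊆ A := interior_subset
  have hIopen : IsOpen[D] I := isOpen_interior
  have hA' : IsMeagre (A \ I) := hloc A hABaire
  refine ⟨A \ I, diff_subset, hA', ?_⟩
  intro a ha
  have haI : a ∈ I := by
    rcases ha with ⟨haA, hnA⟩
    by_contra h
    exact hnA ⟨haA, h⟩
  -- key image composition lemma
  have key : ∀ (b c : G) (S : Set G), (b * ·) '' ((c * ·) '' S) = ((b * c) * ·) '' S := by
    intro b c S
    rw [Set.image_image]
    simp [mul_assoc]
  have keyinv : ∀ (b : G) (S : Set G), (b * ·) '' ((b⁻¹ * ·) '' S) = S := by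
    intro b S
    rw [key]
    simp
  -- nonmeagre transfer under translation
  have hinv' : ∀ (x : G) (M : Set G), ¬ IsMeagre M → ¬ IsMeagre ((x * ·) '' M) := by
    intro x M hM hfalse
    apply hM
    have := hinv x⁻¹ _ hfalse
    rw [key] at this
    simpa using this
  set W : Set G := (a⁻¹ * ·) '' I with hWdef
  have hWopen : IsOpen[D] W := hshift a⁻¹ I hIopen
  have h1W : (1 : G) ∈ W := ⟨a, haI, by simp⟩
  obtain ⟨δ, hδpos, hK⟩ := hkemp W hWopen h1W
  refine ⟨δ, hδpos, ?_, ?_⟩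
  · intro x hx
    obtain ⟨-, hnm⟩ := hK x hx
    set g : G := a * x * a⁻¹ with hgdef
    -- the translated open set
    have himg : (a * ·) '' ((x * ·) '' W ∩ W) = (g * ·) '' I ∩ I := by
      rw [Set.image_inter (mul_right_injective a), hWdef, key, key, keyinv, hgdef]
    have hVnm : ¬ IsMeagre ((g * ·) '' I ∩ I) := by
      rw [← himg]
      exact hinv' a _ hnm
    have hVopen : IsOpen[D] ((g * ·) '' I ∩ I) := (hshift g I hIopen).inter hIopen
    have hVsub : (g * ·) '' I ∩ I ⊆ (g * ·) '' A ∩ A :=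
      Set.inter_subset_inter (Set.image_mono hIsub) hIsub
    constructor
    · refine ⟨(g * ·) '' I ∩ I, hVopen, ?_⟩
      have hsub : symmDiff ((g * ·) '' A ∩ A) ((g * ·) '' I ∩ I) ⊆
          (g * ·) '' (A \ I) ∪ (A \ I) := by
        rw [symmDiff_of_ge hVsub]
        rintro s ⟨⟨hs1, hs2⟩, hs3⟩
        by_cases hsI : s ∈ (g * ·) '' I
        · right
          refine ⟨hs2, ?_⟩
          intro hI'
          exact hs3 ⟨hsI, hI'⟩
        · left
          rcases hs1 with ⟨c, hcA, rfl⟩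
          exact ⟨c, ⟨hcA, fun hc => hsI ⟨c, hc, rfl⟩⟩, rfl⟩
      have hmeag : IsMeagre ((g * ·) '' (A \ I) ∪ (A \ I)) := by
        rw [IsMeagre, Set.compl_union]
        exact Filter.inter_mem (hinv g _ hA') hA'
      exact hmeag.mono hsub
    · intro hfalse
      exact hVnm (hfalse.mono hVsub)
  · intro x hx
    obtain ⟨-, hnm⟩ := hK x hx
    set g : G := a * x * a⁻¹ with hgdef
    have himg : (a * ·) '' ((x * ·) '' W ∩ W) = (g * ·) '' I ∩ I := by
      rw [Set.image_inter (mul_right_injective a), hWdef, key, key, keyinv, hgdef]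
    have hVnm : ¬ IsMeagre ((g * ·) '' I ∩ I) := by
      rw [← himg]
      exact hinv' a _ hnm
    have hne : ((g * ·) '' I ∩ I).Nonempty := by
      rcases Set.eq_empty_or_nonempty ((g * ·) '' I ∩ I) with h | h
      · exact absurd (h ▸ IsMeagre.empty) hVnm
      · exact h
    rcases hne with ⟨b, ⟨c, hcI, rfl⟩, hbI⟩
    have : g = (g * c) * c⁻¹ := by group
    rw [this]
    exact Set.mul_mem_mul (hIsub hbI) (Set.inv_mem_inv.2 (hIsub hcI))
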